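/- Riemann–Roch for twisted fibrations of moment graphs: let π^ξ : Γ → Γ_∼ be a regular ξ-fibration with distinguished vertex e and finite equivalence classes, and let z = (z_y)_y ∈ Z_m(Γ). Then for every class [v], the following equality holds in the fraction field of the completed rational symmetric algebra Ŝ_ℚ(Λ): Σ_{y∈[v]} ĉh(z_y)·Td_y / ξ_y(∏_{β∈L_{[e]}} β) = ĉh(π^ξ_*(z)_{[v]}), where π^ξ_*(z)_{[v]} = Σ_{y∈[v]} z_y/ξ_y(∏_{β∈L_{[e]}} x_β) ∈ ℤ[Λ] is the multiplicative push-forward, ĉh : ℤ[Λ] → Ŝ_ℚ(Λ) is the completed Chern character e^λ ↦ exp(λ), and Td_y := ∏_{β∈L_{[e]}} ξ_y(β)/(1 − exp(−ξ_y(β))) ∈ Ŝ_ℚ(Λ) is the Todd factor at y (each factor μ/(1−exp(−μ)) being a well-defined invertible element of Ŝ_ℚ(Λ)). In other words, the push-forward commutes with the Chern character up to multiplication by the Todd genus of the fibration: π^ξ_*(ĉh(z)·Td^ξ(Γ)) = ĉh(π^ξ_*(z)), where Td^ξ(Γ) = (Td_y)_y and the additive push-forward of a tuple (w_y)_y is (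 Σ_{y∈[v]} w_y/ξ_y(∏_{β∈L_{[e]}} β) )_{[v]}. -/

import Mathlib

noncomputable section

/-- A moment graph on a lattice `Λ`: a poset of vertices (the order given as a
relation with axioms), a set of directed edges `E ⊆ V × V`, and a label function
assigning to each edge a nonzero element of `Λ`, such that edges respect the
order and are not loops. -/
structure MomentGraph (Λ : Type*) [AddCommGroup Λ] (V : Type*) where
  le : V → V → Prop
  le_refl : ∀ v, le v v
  le_trans : ∀ u v w, le u v → le v w → le u w
  le_antisymm : ∀ v w, le v w → le w v → v = w
  E : V → V → Prop
  label : V → V → Λ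
  label_ne_zero : ∀ {v w}, E v w → label v w ≠ 0
  le_of_E : ∀ {v w}, E v w → le v w
  ne_of_E : ∀ {v w}, E v w → v ≠ w

namespace MomentGraph

variable {Λ : Type*} [AddCommGroup Λ] {V V' : Type*}

/-- Underlying (unoriented) adjacency `v — w`. -/
def Adj (G : MomentGraph Λ V) (v w : V) : Prop := G.E v w ∨ G.E w v

open Classical in
/-- The label of the unoriented edge `v — w` (there are no multiple edges, so this
is well defined on adjacent pairs). -/
def albl (G : MomentGraph Λ V) (v w : V) : Λ := if G.E v w then G.label v w else G.label w v

/-- A morphism of moment graphs on the same lattice `Λ` (Definition 2.3):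
a poset morphism on vertices sending edges to edges or collapsing them (MR1),
together with a `ℤ`-linear automorphism of `Λ` for every vertex satisfying
(MR2)(a) and (MR2)(b). -/
structure Hom (G : MomentGraph Λ V) (G' : MomentGraph Λ V') where
  toFun : V → V'
  mono : ∀ {v w}, G.le v w → G'.le (toFun v) (toFun w)
  adj : ∀ {v w}, G.Adj v w → G'.Adj (toFun v) (toFun w) ∨ toFun v = toFun w
  aut : V → (Λ ≃ₗ[ℤ] Λ)
  label_pm : ∀ {v w}, G.Adj v w → toFun v ≠ toFun w →
      aut v (G.albl v w) = G'.albl (toFun v) (toFun w) ∨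
      aut v (G.albl v w) = - G'.albl (toFun v) (toFun w)
  compat : ∀ {v w}, G.Adj v w → toFun v ≠ toFun w → ∀ μ : Λ,
      ∃ n : ℤ, aut v μ - aut w μ = n • G'.albl (toFun v) (toFun w)

/-- A morphism of moment graphs is an isomorphism if it has a two-sided inverse
morphism, inverting both the vertex map and the label automorphisms. -/
def Hom.IsIso {G : MomentGraph Λ V} {G' : MomentGraph Λ V'} (f : G.Hom G') : Prop :=
  ∃ g : G'.Hom G, (∀ v, g.toFun (f.toFun v) = v) ∧ (∀ v', f.toFun (g.toFun v') = v') ∧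
    ∀ v (μ : Λ), g.aut (f.toFun v) (f.aut v μ) = μ

/-- A `Γ`-monodromy: a collection of lattice automorphisms `ξ_v` with
`ξ_v(λ) - ξ_w(λ) ∈ l(v → w)·ℤ` for all edges `v → w`. -/
def Monodromy (G : MomentGraph Λ V) (ξ : V → (Λ ≃ₗ[ℤ] Λ)) : Prop :=
  ∀ {v w}, G.E v w → ∀ μ : Λ, ∃ n : ℤ, ξ v μ - ξ w μ = n • G.label v w

/-- A `Γ`-compatible equivalence relation (EQV1) and (EQV2). -/
def Compatible (G : MomentGraph Λ V) (s : Setoid V) : Prop :=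
  (∀ ⦃v w u⦄, s.r v w → G.le v u → G.le u w → s.r v u) ∧
  (∀ ⦃v₁ w₁⦄, G.E v₁ w₁ → ¬ s.r v₁ w₁ → ∀ v₂, s.r v₂ v₁ →
    (∃! w₂, s.r w₂ w₁ ∧ G.E v₂ w₂) ∧
    (∀ w₂, s.r w₂ w₁ → G.E v₂ w₂ → G.label v₂ w₂ = G.label v₁ w₁))

/-- Edges of the quotient graph: `[v] → [w]` iff `v ≁ w` and there are
representatives joined by an edge. -/
def QE (G : MomentGraph Λ V) (s : Setoid V) (a b : Quotient s) : Prop :=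
  a ≠ b ∧ ∃ v w, Quotient.mk s v = a ∧ Quotient.mk s w = b ∧ G.E v w

open Classical in
/-- The label of a quotient edge, via a choice of representatives. -/
def Qlabel (G : MomentGraph Λ V) (s : Setoid V) (a b : Quotient s) : Λ :=
  if h : ∃ v, ∃ w, Quotient.mk s v = a ∧ Quotient.mk s w = b ∧ G.E v w
  then G.label h.choose h.choose_spec.choose else 0

/-- The covering relation of the vertex poset. -/
def cov (G : MomentGraph Λ V) (v w : V) : Prop :=
  G.le v w ∧ v ≠ w ∧ ∀ u, G.le v u → G.le u w → u = v ∨ u = w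

/-- A special matching of the vertex poset (Definition of Brenti): a bijection `M`
such that `M(v)` covers or is covered by `v`, and if `M(v) ≠ w` and `v ⋖ w`
then `M(v) ≤ M(w)`. -/
def SpecialMatching (G : MomentGraph Λ V) (M : V → V) : Prop :=
  Function.Bijective M ∧ (∀ v, G.cov (M v) v ∨ G.cov v (M v)) ∧
  (∀ v w, M v ≠ w → G.cov v w → G.le (M v) (M w))

end MomentGraph

noncomputable section StructureAlgebras

/-- The generic "structure algebra" construction: given an edge relation `E` on `V`
and an `A`-valued function `lab` (the image of the label of each edge in `A`),
this is the subalgebra of `∏_{v ∈ V} A` of tuples `(z_v)` with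
`z_v - z_w ∈ lab v w · A` for every edge `v → w`, with coordinate-wise operations
and with `A` acting diagonally. -/
def structAlg {V : Type*} {A : Type*} [CommRing A] (E : V → V → Prop) (lab : V → V → A) :
    Subalgebra A (V → A) where
  carrier := {z | ∀ ⦃v w⦄, E v w → ∃ t, z v - z w = lab v w * t}
  mul_mem' := by
    intro a b ha hb v w h
    obtain ⟨t, ht⟩ := ha h
    obtain ⟨t', ht'⟩ := hb h
    refine ⟨a v * t' + t * b w, ?_⟩
    simp only [Pi.mul_apply]
    linear_combination a v * ht' + b w * ht
  one_mem' := by intro v w h; exact ⟨0, by simp⟩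
  add_mem' := by
    intro a b ha hb v w h
    obtain ⟨t, ht⟩ := ha h
    obtain ⟨t', ht'⟩ := hb h
    refine ⟨t + t', ?_⟩
    simp only [Pi.add_apply]
    linear_combination ht + ht'
  zero_mem' := by intro v w h; exact ⟨0, by simp⟩
  algebraMap_mem' := by
    intro r v w h
    exact ⟨0, by simp⟩

set_option synthInstance.maxHeartbeats 4000000 in
instance structAlgAddCommGroup {V A : Type*} [CommRing A] (E : V → V → Prop)
    (lab : V → V → A) : AddCommGroup (structAlg E lab) :=
  inferInstance

set_option synthInstance.maxHeartbeats 4000000 in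
instance structAlgModule {V A : Type*} [CommRing A] (E : V → V → Prop)
    (lab : V → V → A) : Module A (structAlg E lab) :=
  inferInstance

/-- The group ring `ℤ[Λ]`. -/
abbrev GrpRing (Λ : Type*) [AddCommGroup Λ] := AddMonoidAlgebra ℤ Λ

variable {Λ : Type*} [AddCommGroup Λ]

/-- The basis element `e^μ` of the group ring `ℤ[Λ]`. -/
def grExp (μ : Λ) : GrpRing Λ := AddMonoidAlgebra.single μ 1

/-- The element `x_μ = 1 - e^{-μ}` of the group ring `ℤ[Λ]`. -/
def grX (μ : Λ) : GrpRing Λ := 1 - grExp (-μ)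

/-- The augmentation `ℤ[Λ] → ℤ`, `e^λ ↦ 1`. -/
def grAug (Λ : Type*) [AddCommGroup Λ] : GrpRing Λ →+* ℤ :=
  ((AddMonoidAlgebra.lift ℤ ℤ Λ) 1).toRingHom

/-- The augmentation ideal `I_m ⊂ ℤ[Λ]`. -/
def Im (Λ : Type*) [AddCommGroup Λ] : Ideal (GrpRing Λ) := RingHom.ker (grAug Λ)

/-- The multiplicative structure algebra of edge data `(E, lab)`:
tuples `(z_v)` of elements of `ℤ[Λ]` with `z_v - z_w ∈ x_{lab v w}·ℤ[Λ]`
for all edges. -/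
abbrev ZmOf {V : Type*} (E : V → V → Prop) (lab : V → V → Λ) :
    Subalgebra (GrpRing Λ) (V → GrpRing Λ) :=
  structAlg E fun v w => grX (lab v w)

/-- The multiplicative structure algebra `Z_m(Γ)` of a moment graph. -/
abbrev MomentGraph.Zm {V : Type*} (G : MomentGraph Λ V) :
    Subalgebra (GrpRing Λ) (V → GrpRing Λ) :=
  ZmOf G.E G.label

/-- Index type of a chosen basis of the lattice `Λ`. -/
abbrev bIdx (Λ : Type*) [AddCommGroup Λ] [Module.Free ℤ Λ] [Module.Finite ℤ Λ] :=
  Module.Free.ChooseBasisIndex ℤ Λ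

/-- A model of the symmetric algebra `S^*(Λ)` over `ℤ`: the polynomial ring on a
basis of `Λ`. -/
abbrev SymZ (Λ : Type*) [AddCommGroup Λ] [Module.Free ℤ Λ] [Module.Finite ℤ Λ] :=
  MvPolynomial (bIdx Λ) ℤ

variable [Module.Free ℤ Λ] [Module.Finite ℤ Λ]

/-- The canonical embedding `Λ → S^*(Λ)` (degree-one part). -/
def iotaZ (Λ : Type*) [AddCommGroup Λ] [Module.Free ℤ Λ] [Module.Finite ℤ Λ] :
    Λ →ₗ[ℤ] SymZ Λ :=
  (Finsupp.linearCombination ℤ fun i => (MvPolynomial.X i : SymZ Λ)).comp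
    (Module.Free.chooseBasis ℤ Λ).repr.toLinearMap

/-- The additive structure algebra of edge data `(E, lab)`:
tuples `(z_v)` of elements of `S^*(Λ)` with `z_v - z_w ∈ l(v→w)·S^*(Λ)`
for all edges. -/
abbrev ZaOf {V : Type*} (E : V → V → Prop) (lab : V → V → Λ) :
    Subalgebra (SymZ Λ) (V → SymZ Λ) :=
  structAlg E fun v w => iotaZ Λ (lab v w)

/-- The additive structure algebra `Z_a(Γ)` of a moment graph. -/
abbrev MomentGraph.Za {V : Type*} (G : MomentGraph Λ V) :
    Subalgebra (SymZ Λ) (V → SymZ Λ) :=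
  ZaOf G.E G.label

end StructureAlgebras

noncomputable section Chern

variable {Λ : Type*} [AddCommGroup Λ] [Module.Free ℤ Λ] [Module.Finite ℤ Λ]

/-- A model of the rational symmetric algebra `S^*(Λ) ⊗ ℚ`. -/
abbrev SymQ (Λ : Type*) [AddCommGroup Λ] [Module.Free ℤ Λ] [Module.Finite ℤ Λ] :=
  MvPolynomial (bIdx Λ) ℚ

/-- The canonical embedding `Λ → S^*(Λ) ⊗ ℚ`. -/
def iotaQ (Λ : Type*) [AddCommGroup Λ] [Module.Free ℤ Λ] [Module.Finite ℤ Λ] :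
    Λ →ₗ[ℤ] SymQ Λ :=
  (Finsupp.linearCombination ℤ fun i => (MvPolynomial.X i : SymQ Λ)).comp
    (Module.Free.chooseBasis ℤ Λ).repr.toLinearMap

/-- The augmentation ideal `I_a` of the rational symmetric algebra: the kernel of
the ring homomorphism sending every `λ ∈ Λ` to `0`. -/
def IaQ (Λ : Type*) [AddCommGroup Λ] [Module.Free ℤ Λ] [Module.Finite ℤ Λ] :
    Ideal (SymQ Λ) :=
  RingHom.ker (MvPolynomial.constantCoeff : SymQ Λ →+* ℚ)

/-- The truncated rational symmetric algebra `S^{≤ i}_ℚ(Λ) = (S^*(Λ)/I_a^{i+1}) ⊗ ℚ`. -/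
abbrev STrunc (Λ : Type*) [AddCommGroup Λ] [Module.Free ℤ Λ] [Module.Finite ℤ Λ] (i : ℕ) :=
  SymQ Λ ⧸ (IaQ Λ) ^ (i + 1)

/-- The quotient map `S^*_ℚ(Λ) → S^{≤ i}_ℚ(Λ)`. -/
def trMk (Λ : Type*) [AddCommGroup Λ] [Module.Free ℤ Λ] [Module.Finite ℤ Λ] (i : ℕ) :
    SymQ Λ →+* STrunc Λ i :=
  Ideal.Quotient.mk _

/-- The truncated exponential `Σ_{j ≤ i} μ^j/j!` in `S^{≤ i}_ℚ(Λ)`. -/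
def texp (Λ : Type*) [AddCommGroup Λ] [Module.Free ℤ Λ] [Module.Finite ℤ Λ]
    (i : ℕ) (μ : Λ) : STrunc Λ i :=
  ∑ j ∈ Finset.range (i + 1), (j.factorial : ℚ)⁻¹ • (trMk Λ i (iotaQ Λ μ)) ^ j

/-- The truncated rational additive structure algebra of edge data `(E, lab)`. -/
abbrev ZatOf {V : Type*} (i : ℕ) (E : V → V → Prop) (lab : V → V → Λ) :
    Subalgebra (STrunc Λ i) (V → STrunc Λ i) :=
  structAlg E fun v w => trMk Λ i (iotaQ Λ (lab v w))

/-- The truncated rational additive structure algebra `Z_a^{≤ i}(Γ)_ℚ`. -/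
abbrev MomentGraph.Zat {V : Type*} (G : MomentGraph Λ V) (i : ℕ) :
    Subalgebra (STrunc Λ i) (V → STrunc Λ i) :=
  ZatOf i G.E G.label

end Chern

noncomputable section Fibrations

namespace MomentGraph

variable {Λ : Type*} [AddCommGroup Λ] {V : Type*}

/-- The data of a fibration `π : Γ → Γ_∼` (Definition of fibration): for any two
classes `[v], [w]` an isomorphism of moment graphs between the fibres `Γ_{[v]}`
and `Γ_{[w]}` (full subgraphs on the classes), given by a vertex bijection
`f v w` and a single label automorphism `fl v w` (FB2), compatible with change of
representatives and satisfying the cocycle conditions (FB1). -/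
structure Fib (G : MomentGraph Λ V) (s : Setoid V) where
  f : V → V → V → V
  fl : V → V → (Λ ≃ₗ[ℤ] Λ)
  maps_class : ∀ ⦃v w y⦄, s.r y v → s.r (f v w y) w
  f_congr : ∀ ⦃v v' w w' y⦄, s.r v v' → s.r w w' → s.r y v → f v w y = f v' w' y
  fl_congr : ∀ ⦃v v' w w'⦄, s.r v v' → s.r w w' → fl v w = fl v' w'
  f_id : ∀ ⦃v y⦄, s.r y v → f v v y = y
  f_comp : ∀ ⦃u v w y⦄, s.r y u → f v w (f u v y) = f u w y
  f_mono : ∀ ⦃v w y y'⦄, s.r y v → s.r y' v → G.le y y' → G.le (f v w y) (f v w y')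
  f_edge : ∀ ⦃v w y y'⦄, s.r y v → s.r y' v → G.E y y' → G.E (f v w y) (f v w y')
  f_label : ∀ ⦃v w y y'⦄, s.r y v → s.r y' v → G.E y y' →
    fl v w (G.label y y') = G.label (f v w y) (f v w y') ∨
    fl v w (G.label y y') = - G.label (f v w y) (f v w y')

/-- The set of neighbours of `y` inside its fibre; the multiset `L_{y,∼}` is the
multiset of labels `G.albl y w` for `w` in this set. -/
def fnbr (G : MomentGraph Λ V) (s : Setoid V) (y : V) : Set V :=
  {w | s.r y w ∧ G.Adj y w}

/-- The set of neighbours of `y` inside its fibre indexing the multiset `N_y^ξ`: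
those `w` for which `ξ_y(f^{[v],[e]}_l(l(y—w))) ∈ -L_{y,∼}`; the multiset `N_y^ξ`
is the multiset of `F.fl y e (G.albl y w)` for `w` in this set. -/
def Nset (G : MomentGraph Λ V) (s : Setoid V) (F : G.Fib s) (ξ : V → (Λ ≃ₗ[ℤ] Λ))
    (e : V) (y : V) : Set V :=
  {w ∈ G.fnbr s y | ∃ w' ∈ G.fnbr s y, ξ y (F.fl y e (G.albl y w)) = - G.albl y w'}

variable [Module.Free ℤ Λ] [Module.Finite ℤ Λ]

/-- Compatibility of the collection `ξ = {ξ_y}` with the fibre `Γ_{[e]}`: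
conditions (CF1) (product identity in `S^*(Λ)` and stability of `±L_{y,∼}`) and
(CF2) (parity and divisibility along edges inside a fibre). -/
def FibCompat (G : MomentGraph Λ V) (s : Setoid V) (F : G.Fib s)
    (ξ : V → (Λ ≃ₗ[ℤ] Λ)) (e : V) : Prop :=
  (∀ y : V,
    (∏ᶠ w ∈ G.fnbr s y, iotaZ Λ (ξ y (F.fl y e (G.albl y w)))) =
      (∏ᶠ w ∈ G.fnbr s y, iotaZ Λ (G.albl y w)) ∨
    (∏ᶠ w ∈ G.fnbr s y, iotaZ Λ (ξ y (F.fl y e (G.albl y w)))) =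
      - (∏ᶠ w ∈ G.fnbr s y, iotaZ Λ (G.albl y w))) ∧
  (∀ y : V, ∀ w ∈ G.fnbr s y, ∃ w' ∈ G.fnbr s y,
    ξ y (F.fl y e (G.albl y w)) = G.albl y w' ∨
    ξ y (F.fl y e (G.albl y w)) = - G.albl y w') ∧
  (∀ ⦃y y'⦄, s.r y y' → G.E y y' →
    ((G.Nset s F ξ e y).ncard % 2 ≠ (G.Nset s F ξ e y').ncard % 2) ∧
    ∃ n : ℤ,
      (∑ᶠ w ∈ G.Nset s F ξ e y, ξ y (F.fl y e (G.albl y w))) -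
        (∑ᶠ w ∈ G.Nset s F ξ e y', ξ y' (F.fl y' e (G.albl y' w))) = n • G.label y y')

/-- Regularity of a `ξ`-fibration (multiplicative version): the multiset of
labels `L_{v,∼}` only depends on the class of `v`, each `x_γ` (`γ ∈ L_{[v]}`) is
irreducible in `ℤ[Λ]`, and for distinct `γ, γ' ∈ L_{[v]}`, `x_γ ∣ x_{γ'}·x`
implies `x_γ ∣ x`. -/
def RegularM (G : MomentGraph Λ V) (s : Setoid V) : Prop :=
  (∀ ⦃v w⦄, s.r v w → ∀ μ : Λ,
    {u ∈ G.fnbr s v | G.albl v u = μ}.ncard = {u ∈ G.fnbr s w | G.albl w u = μ}.ncard) ∧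
  (∀ v : V, ∀ w ∈ G.fnbr s v, Irreducible (grX (G.albl v w))) ∧
  (∀ v : V, ∀ w ∈ G.fnbr s v, ∀ w' ∈ G.fnbr s v, G.albl v w ≠ G.albl v w' →
    ∀ t : GrpRing Λ, grX (G.albl v w) ∣ grX (G.albl v w') * t → grX (G.albl v w) ∣ t)

/-- Regularity of a `ξ`-fibration (additive version, in `S^*(Λ)`). -/
def RegularA (G : MomentGraph Λ V) (s : Setoid V) : Prop :=
  (∀ ⦃v w⦄, s.r v w → ∀ μ : Λ,
    {u ∈ G.fnbr s v | G.albl v u = μ}.ncard = {u ∈ G.fnbr s w | G.albl w u = μ}.ncard) ∧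
  (∀ v : V, ∀ w ∈ G.fnbr s v, Irreducible (iotaZ Λ (G.albl v w))) ∧
  (∀ v : V, ∀ w ∈ G.fnbr s v, ∀ w' ∈ G.fnbr s v, G.albl v w ≠ G.albl v w' →
    ∀ t : SymZ Λ, iotaZ Λ (G.albl v w) ∣ iotaZ Λ (G.albl v w') * t → iotaZ Λ (G.albl v w) ∣ t)

end MomentGraph

end Fibrations

noncomputable section Completed

/-- A model of the completed rational symmetric algebra
`Ŝ_ℚ(Λ) = ∏_{j ≥ 0} S^j(Λ) ⊗ ℚ`: the formal power series ring on a basis of `Λ`. -/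
abbrev SymHat (Λ : Type*) [AddCommGroup Λ] [Module.Free ℤ Λ] [Module.Finite ℤ Λ] :=
  MvPowerSeries (bIdx Λ) ℚ

variable {Λ : Type*} [AddCommGroup Λ] [Module.Free ℤ Λ] [Module.Finite ℤ Λ]

/-- The exponential `exp(μ) = Σ_{j ≥ 0} μ^j/j! ∈ Ŝ_ℚ(Λ)` of a lattice element
`μ ∈ Λ`: since `μ` is homogeneous of degree one, the degree-`d` coefficient of
`exp μ` is the corresponding coefficient of `μ^{|d|}/|d|!`. -/
def lexp (Λ : Type*) [AddCommGroup Λ] [Module.Free ℤ Λ] [Module.Finite ℤ Λ]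
    (μ : Λ) : SymHat Λ :=
  fun d => (MvPolynomial.coeff d ((iotaQ Λ μ) ^ (d.sum fun _ n => n))) /
    ((d.sum fun _ n => n).factorial : ℚ)

/-- The inclusion `S^*_ℚ(Λ) → Ŝ_ℚ(Λ)`. -/
def symToHat (Λ : Type*) [AddCommGroup Λ] [Module.Free ℤ Λ] [Module.Finite ℤ Λ] :
    SymQ Λ →+* SymHat Λ :=
  (MvPolynomial.coeToMvPowerSeries.ringHom : SymQ Λ →+* SymHat Λ)

end Completed

noncomputable section Statements
open MomentGraph
variable {Λ : Type*} [AddCommGroup Λ] [Module.Free ℤ Λ] [Module.Finite ℤ Λ]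
variable {V : Type*}


lemma grX_ne_zero {Λ : Type*} [AddCommGroup Λ] {μ : Λ} (h : μ ≠ 0) : grX μ ≠ 0 := by
  intro hc
  apply h
  rw [grX] at hc
  have h1 : grExp (-μ) = (1 : GrpRing Λ) := (sub_eq_zero.mp hc).symm
  rw [grExp, AddMonoidAlgebra.one_def] at h1
  have h2 := (AddMonoidAlgebra.single_left_inj (one_ne_zero (α := ℤ))).mp h1
  simpa using neg_eq_zero.mp h2

set_option synthInstance.maxHeartbeats 4000000 in
set_option maxHeartbeats 8000000 in
theorem stmt16 (G : MomentGraph Λ V) (s : Setoid V) (hcomp : G.Compatible s)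
    (F : G.Fib s) (ξ : V → (Λ ≃ₗ[ℤ] Λ)) (hmon : G.Monodromy ξ) (e : V)
    (hcf : G.FibCompat s F ξ e) (hreg : G.RegularM s)
    (hfin : ∀ v : V, {w | s.r v w}.Finite)
    [IsDomain (GrpRing Λ)] [IsDomain (SymHat Λ)]
    (gξ : V → (GrpRing Λ →+* GrpRing Λ))
    (hgξ : ∀ y (μ : Λ), gξ y (grExp μ) = grExp (ξ y μ))
    (cchat : GrpRing Λ →+* SymHat Λ)
    (hcchat : ∀ μ : Λ, cchat (grExp μ) = lexp Λ μ)
    (hinj : Function.Injective cchat)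
    (todd : Λ → SymHat Λ)
    (htodd : ∀ μ : Λ, μ ≠ 0 →
      todd μ * (1 - lexp Λ (-μ)) = symToHat Λ (iotaQ Λ μ) ∧ IsUnit (todd μ)) :
    ∀ (z : G.Zm) (v : V) (pfv : GrpRing Λ),
      (algebraMap (GrpRing Λ) (FractionRing (GrpRing Λ)) pfv =
        ∑ᶠ y ∈ {y | s.r v y},
          (algebraMap (GrpRing Λ) (FractionRing (GrpRing Λ)) ((z : V → GrpRing Λ) y)) /
            (algebraMap (GrpRing Λ) (FractionRing (GrpRing Λ))
              (gξ y (∏ᶠ w ∈ G.fnbr s e, grX (G.albl e w))))) →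
      (∑ᶠ y ∈ {y | s.r v y},
        (algebraMap (SymHat Λ) (FractionRing (SymHat Λ))
            (cchat ((z : V → GrpRing Λ) y) * ∏ᶠ w ∈ G.fnbr s e, todd (ξ y (G.albl e w)))) /
          (algebraMap (SymHat Λ) (FractionRing (SymHat Λ))
            (∏ᶠ w ∈ G.fnbr s e, symToHat Λ (iotaQ Λ (ξ y (G.albl e w)))))) =
      algebraMap (SymHat Λ) (FractionRing (SymHat Λ)) (cchat pfv) := by
  intro z v pfv hpf
  classical
  set L := FractionRing (SymHat Λ) with hL
  have halgS : Function.Injective (algebraMap (SymHat Λ) L) :=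
    IsFractionRing.injective _ _
  set g : GrpRing Λ →+* L := (algebraMap (SymHat Λ) L).comp cchat with hgdef
  have hginj : Function.Injective g := halgS.comp hinj
  set φ : FractionRing (GrpRing Λ) →+* L := IsFractionRing.lift hginj with hphidef
  have hfe : (G.fnbr s e).Finite := (hfin e).subset (fun w hw => hw.1)
  have hfv : ({y | s.r v y}).Finite := hfin v
  have hlbl : ∀ w ∈ G.fnbr s e, G.albl e w ≠ 0 := by
    intro w hw
    rcases hw.2 with h | h
    · rw [MomentGraph.albl, if_pos h]; exact G.label_ne_zero h
    · rw [MomentGraph.albl]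
      split
      · exact G.label_ne_zero ‹_›
      · exact G.label_ne_zero h
  have hξl : ∀ (y : V), ∀ w ∈ G.fnbr s e, ξ y (G.albl e w) ≠ 0 := by
    intro y w hw hc
    exact hlbl w hw ((ξ y).map_eq_zero_iff.mp hc)
  -- gξ maps grX to grX of the image
  have hgX : ∀ (y : V) (μ : Λ), gξ y (grX μ) = grX (ξ y μ) := by
    intro y μ
    rw [grX, map_sub, map_one, hgξ, map_neg, grX]
  have hcX : ∀ ν : Λ, cchat (grX ν) = 1 - lexp Λ (-ν) := by
    intro ν
    rw [grX, map_sub, map_one, hcchat]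
  -- abbreviations over the finset of fibre neighbours of e
  set Fe := hfe.toFinset with hFe
  set P : GrpRing Λ := ∏ᶠ w ∈ G.fnbr s e, grX (G.albl e w) with hP
  have hPprod : P = ∏ w ∈ Fe, grX (G.albl e w) :=
    finprod_mem_eq_finite_toFinset_prod _ hfe
  -- image of P under gξ y and cchat
  have hDP : ∀ y : V, cchat (gξ y P) =
      ∏ w ∈ Fe, (1 - lexp Λ (-(ξ y (G.albl e w)))) := by
    intro y
    rw [hPprod, map_prod, map_prod]
    exact Finset.prod_congr rfl fun w _ => by rw [hgX, hcX]
  have hPne : ∀ y : V, gξ y P ≠ 0 := by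
    intro y
    rw [hPprod, map_prod]
    refine Finset.prod_ne_zero_iff.mpr fun w hw => ?_
    rw [hgX]
    exact grX_ne_zero (hξl y w (hfe.mem_toFinset.mp hw))
  have hcPne : ∀ y : V, cchat (gξ y P) ≠ 0 := by
    intro y hc
    exact hPne y (hinj (by rw [hc, map_zero]))
  -- Todd products
  have hT : ∀ y : V, (∏ᶠ w ∈ G.fnbr s e, todd (ξ y (G.albl e w))) =
      ∏ w ∈ Fe, todd (ξ y (G.albl e w)) :=
    fun y => finprod_mem_eq_finite_toFinset_prod _ hfe
  have hTne : ∀ y : V, (∏ w ∈ Fe, todd (ξ y (G.albl e w))) ≠ 0 := by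
    intro y
    refine Finset.prod_ne_zero_iff.mpr fun w hw => ?_
    exact (htodd _ (hξl y w (hfe.mem_toFinset.mp hw))).2.ne_zero
  have hS : ∀ y : V, (∏ᶠ w ∈ G.fnbr s e, symToHat Λ (iotaQ Λ (ξ y (G.albl e w)))) =
      (∏ w ∈ Fe, todd (ξ y (G.albl e w))) * cchat (gξ y P) := by
    intro y
    rw [finprod_mem_eq_finite_toFinset_prod _ hfe, hDP, ← Finset.prod_mul_distrib]
    refine Finset.prod_congr rfl fun w hw => ?_
    exact ((htodd _ (hξl y w (hfe.mem_toFinset.mp hw))).1).symm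
  -- apply φ to the hypothesis
  have hφalg : ∀ x : GrpRing Λ,
      φ (algebraMap (GrpRing Λ) (FractionRing (GrpRing Λ)) x) =
        algebraMap (SymHat Λ) L (cchat x) := by
    intro x
    rw [hphidef, IsFractionRing.lift_algebraMap]
    rfl
  have hpf2 : algebraMap (SymHat Λ) L (cchat pfv) =
      ∑ y ∈ hfv.toFinset,
        algebraMap (SymHat Λ) L (cchat ((z : V → GrpRing Λ) y)) /
          algebraMap (SymHat Λ) L (cchat (gξ y P)) := by
    have := congrArg φ hpf
    rw [hφalg, finsum_mem_eq_finite_toFinset_sum _ hfv, map_sum] at this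
    rw [this]
    refine Finset.sum_congr rfl fun y _ => ?_
    rw [map_div₀, hφalg, hφalg]
  -- conclude
  rw [finsum_mem_eq_finite_toFinset_sum _ hfv, hpf2]
  refine Finset.sum_congr rfl fun y _ => ?_
  rw [hT, hS, map_mul, map_mul, mul_comm (algebraMap (SymHat Λ) L (cchat ((z : V → GrpRing Λ) y)))]
  rw [mul_div_mul_left]
  intro hc
  exact hTne y (halgS (by rw [hc, map_zero]))


end Statements
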